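/- Let k be a field of characteristic 2 in which every element is a square (for example, a finite field or an algebraically closed field of characteristic 2). If A, B ∈ GL(2,k) are such that Inn_A and Inn_B are both k-involutions of SL(2,k) (each squares to the identity on SL(2,k) and neither is the identity on SL(2,k)), then Inn_A and Inn_B are isomorphic: there exist C ∈ GL(2,k) and a nonzero p ∈ k with C·A·C⁻¹ = p·B. -/

import Mathlib

set_option linter.unusedSectionVars false

section Aux

variable {k : Type*} [Field k] [CharP k 2]

private lemma mk_unit' (a b c d : k) (h : a * d - b * c ≠ 0) :
    ∃ U : (Matrix (Fin 2) (Fin 2) k)ˣ, (U : Matrix (Fin 2) (Fin 2) k) = !![a,b;c,d] := by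
  refine ⟨⟨!![a,b;c,d], (a*d - b*c)⁻¹ • !![d,-b;-c,a], ?_, ?_⟩, rfl⟩ <;>
  · ext i j
    fin_cases i <;> fin_cases j <;>
      · simp [Matrix.mul_apply, Fin.sum_univ_two, Matrix.one_apply]
        first
        | linear_combination mul_inv_cancel₀ h
        | (field_simp <;> ring_nf)

private lemma conj_E12' (N : Matrix (Fin 2) (Fin 2) k) (h2 : N * N = 0) (h0 : N ≠ 0) :
    ∃ U : (Matrix (Fin 2) (Fin 2) k)ˣ,
      (U : Matrix (Fin 2) (Fin 2) k) * !![0,1;0,0] * (↑U⁻¹ : Matrix (Fin 2) (Fin 2) k) = N := by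
  have h00 : N 0 0 * N 0 0 + N 0 1 * N 1 0 = 0 := by
    have := congrFun (congrFun h2 0) 0
    simpa [Matrix.mul_apply, Fin.sum_univ_two] using this
  have h10 : N 1 0 * N 0 0 + N 1 1 * N 1 0 = 0 := by
    have := congrFun (congrFun h2 1) 0
    simpa [Matrix.mul_apply, Fin.sum_univ_two] using this
  have h11 : N 1 0 * N 0 1 + N 1 1 * N 1 1 = 0 := by
    have := congrFun (congrFun h2 1) 1
    simpa [Matrix.mul_apply, Fin.sum_univ_two] using this
  by_cases hc : N 1 0 = 0
  · have ha : N 0 0 = 0 := by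
      have := h00; rw [hc] at this; simp at this
      exact pow_eq_zero_iff (n := 2) (by norm_num) |>.mp (by rw [sq]; simpa using this)
    have hd : N 1 1 = 0 := by
      have := h11; rw [hc] at this; simp at this
      exact pow_eq_zero_iff (n := 2) (by norm_num) |>.mp (by rw [sq]; simpa using this)
    have hb : N 0 1 ≠ 0 := by
      intro hb
      apply h0
      rw [Matrix.eta_fin_two N, ha, hb, hc, hd]
      ext i j; fin_cases i <;> fin_cases j <;> simp
    obtain ⟨U, hU⟩ := mk_unit' (N 0 1) 0 0 (1:k) (by simpa using hb)
    refine ⟨U, ?_⟩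
    rw [Units.mul_inv_eq_iff_eq_mul, hU]
    rw [Matrix.eta_fin_two N, ha, hc, hd]
    ext i j; fin_cases i <;> fin_cases j <;> simp [Matrix.mul_apply, Fin.sum_univ_two]
  · obtain ⟨U, hU⟩ := mk_unit' (N 0 0) 1 (N 1 0) (0:k) (by simpa using hc)
    refine ⟨U, ?_⟩
    rw [Units.mul_inv_eq_iff_eq_mul, hU]
    rw [Matrix.eta_fin_two N]
    ext i j; fin_cases i <;> fin_cases j <;>
      simp [Matrix.mul_apply, Fin.sum_univ_two] <;>
      first
      | linear_combination (-2:k) * h00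
      | linear_combination -h10 - h00
      | linear_combination h00
      | linear_combination -h00
      | linear_combination h10
      | linear_combination -h10

private lemma sq_scalar' (A : (Matrix (Fin 2) (Fin 2) k)ˣ)
    (hA2 : ∀ X : Matrix (Fin 2) (Fin 2) k, X.det = 1 →
      (A : Matrix (Fin 2) (Fin 2) k) *
        ((A : Matrix (Fin 2) (Fin 2) k) * X * (↑A⁻¹ : Matrix (Fin 2) (Fin 2) k)) *
        (↑A⁻¹ : Matrix (Fin 2) (Fin 2) k) = X) :
    ∃ s : k, s ≠ 0 ∧ (A : Matrix (Fin 2) (Fin 2) k) * (A : Matrix (Fin 2) (Fin 2) k) = s • 1 := by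
  set S : Matrix (Fin 2) (Fin 2) k :=
    (A : Matrix (Fin 2) (Fin 2) k) * (A : Matrix (Fin 2) (Fin 2) k) with hSdef
  have key : ∀ X : Matrix (Fin 2) (Fin 2) k, X.det = 1 → S * X = X * S := by
    intro X hX
    have h := congrArg (fun Y => Y * S) (hA2 X hX)
    simp only [hSdef] at h ⊢
    simpa only [mul_assoc, Units.inv_mul_cancel_left, Units.inv_mul, mul_one] using h
  have hc1 := key !![1,1;0,1] (by simp [Matrix.det_fin_two_of])
  have hc2 := key !![1,0;1,1] (by simp [Matrix.det_fin_two_of])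
  have e10 : S 1 0 = 0 := by
    have h := congrFun (congrFun hc1 1) 1
    simp [Matrix.mul_apply, Fin.sum_univ_two] at h
    linear_combination h
  have e01 : S 0 1 = 0 := by
    have h := congrFun (congrFun hc2 0) 0
    simp [Matrix.mul_apply, Fin.sum_univ_two] at h
    linear_combination h
  have ediag : S 0 0 = S 1 1 := by
    have h := congrFun (congrFun hc1 0) 1
    simp [Matrix.mul_apply, Fin.sum_univ_two] at h
    linear_combination h
  refine ⟨S 0 0, ?_, ?_⟩
  · intro hs
    have hSz : S = 0 := by
      ext i j; fin_cases i <;> fin_cases j <;>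
        simp [e10, e01, ← ediag, hs]
    have h1 : (1 : Matrix (Fin 2) (Fin 2) k) = 0 := by
      calc (1 : Matrix (Fin 2) (Fin 2) k) = ↑(A*A)⁻¹ * ↑(A*A) := (Units.inv_mul _).symm
        _ = ↑(A*A)⁻¹ * S := by rw [Units.val_mul]
        _ = 0 := by rw [hSz, mul_zero]
    have := congrFun (congrFun h1 0) 0
    simp [Matrix.one_apply] at this
  · ext i j; fin_cases i <;> fin_cases j <;>
      simp [Matrix.one_apply, e10, e01, ← ediag]

private lemma char2_two (x : k) : x + x = 0 := by
  have h2 : (2:k) = 0 := by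
    have := CharP.cast_eq_zero k 2; simpa using this
  rw [← two_mul, h2, zero_mul]

private lemma nilp_of_inv (A : (Matrix (Fin 2) (Fin 2) k)ˣ) (s d : k)
    (hS : (A : Matrix (Fin 2) (Fin 2) k) * (A : Matrix (Fin 2) (Fin 2) k) = s • 1)
    (hd : d ^ 2 = s) :
    ((A : Matrix (Fin 2) (Fin 2) k) - d • 1) * ((A : Matrix (Fin 2) (Fin 2) k) - d • 1) = 0 := by
  have expand : ((A : Matrix (Fin 2) (Fin 2) k) - d • 1) * ((A : Matrix (Fin 2) (Fin 2) k) - d • 1)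
      = ((A : Matrix (Fin 2) (Fin 2) k) * A + (d*d) • 1)
        - (d • (A : Matrix (Fin 2) (Fin 2) k) + d • (A : Matrix (Fin 2) (Fin 2) k)) := by
    simp only [sub_mul, mul_sub, smul_sub, smul_mul_assoc, mul_smul_comm, one_mul, mul_one, smul_smul]
    abel
  rw [expand, ← add_smul, char2_two d, zero_smul, sub_zero, hS, ← hd, sq, ← add_smul,
    char2_two (d*d), zero_smul]

end Aux

/-- Let k be a field of characteristic 2 in which every element is
a square. If A, B ∈ GL(2,k) are such that Inn_A and Inn_B are both
k-involutions of SL(2,k), then Inn_A and Inn_B are isomorphic: there exist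
C ∈ GL(2,k) and nonzero p ∈ k with C·A·C⁻¹ = p·B. -/
theorem stmt_5 {k : Type*} [Field k] [CharP k 2] (hsq : ∀ x : k, ∃ y : k, y ^ 2 = x)
    (A B : (Matrix (Fin 2) (Fin 2) k)ˣ)
    (hA2 : ∀ X : Matrix (Fin 2) (Fin 2) k, X.det = 1 →
      (A : Matrix (Fin 2) (Fin 2) k) *
        ((A : Matrix (Fin 2) (Fin 2) k) * X * (↑A⁻¹ : Matrix (Fin 2) (Fin 2) k)) *
        (↑A⁻¹ : Matrix (Fin 2) (Fin 2) k) = X)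
    (hA1 : ¬ (∀ X : Matrix (Fin 2) (Fin 2) k, X.det = 1 →
      (A : Matrix (Fin 2) (Fin 2) k) * X * (↑A⁻¹ : Matrix (Fin 2) (Fin 2) k) = X))
    (hB2 : ∀ X : Matrix (Fin 2) (Fin 2) k, X.det = 1 →
      (B : Matrix (Fin 2) (Fin 2) k) *
        ((B : Matrix (Fin 2) (Fin 2) k) * X * (↑B⁻¹ : Matrix (Fin 2) (Fin 2) k)) *
        (↑B⁻¹ : Matrix (Fin 2) (Fin 2) k) = X)
    (hB1 : ¬ (∀ X : Matrix (Fin 2) (Fin 2) k, X.det = 1 →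
      (B : Matrix (Fin 2) (Fin 2) k) * X * (↑B⁻¹ : Matrix (Fin 2) (Fin 2) k) = X)) :
    ∃ C : (Matrix (Fin 2) (Fin 2) k)ˣ, ∃ p : k, p ≠ 0 ∧
      (C : Matrix (Fin 2) (Fin 2) k) * (A : Matrix (Fin 2) (Fin 2) k) *
        (↑C⁻¹ : Matrix (Fin 2) (Fin 2) k) = p • (B : Matrix (Fin 2) (Fin 2) k) := by
  obtain ⟨s, hs0, hS⟩ := sq_scalar' A hA2
  obtain ⟨t, ht0, hT⟩ := sq_scalar' B hB2
  obtain ⟨d, hd⟩ := hsq s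
  obtain ⟨e, he⟩ := hsq t
  have hd0 : d ≠ 0 := by rintro rfl; apply hs0; rw [← hd]; ring
  have he0 : e ≠ 0 := by rintro rfl; apply ht0; rw [← he]; ring
  set N : Matrix (Fin 2) (Fin 2) k := ↑A - d • 1 with hNdef
  set M : Matrix (Fin 2) (Fin 2) k := ↑B - e • 1 with hMdef
  have hN2 : N * N = 0 := nilp_of_inv A s d hS hd
  have hM2 : M * M = 0 := nilp_of_inv B t e hT he
  have hN0 : N ≠ 0 := by
    intro hN0
    apply hA1
    intro X hX
    have hA' : (A : Matrix (Fin 2) (Fin 2) k) = d • 1 := by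
      have := sub_eq_zero.mp hN0
      simpa using this
    have comm : (A : Matrix (Fin 2) (Fin 2) k) * X = X * (A : Matrix (Fin 2) (Fin 2) k) := by
      rw [hA', smul_mul_assoc, mul_smul_comm, one_mul, mul_one]
    rw [comm, mul_assoc, Units.mul_inv, mul_one]
  have hM0 : M ≠ 0 := by
    intro hM0
    apply hB1
    intro X hX
    have hB' : (B : Matrix (Fin 2) (Fin 2) k) = e • 1 := by
      have := sub_eq_zero.mp hM0
      simpa using this
    have comm : (B : Matrix (Fin 2) (Fin 2) k) * X = X * (B : Matrix (Fin 2) (Fin 2) k) := by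
      rw [hB', smul_mul_assoc, mul_smul_comm, one_mul, mul_one]
    rw [comm, mul_assoc, Units.mul_inv, mul_one]
  set p : k := d * e⁻¹ with hpdef
  have hp0 : p ≠ 0 := mul_ne_zero hd0 (inv_ne_zero he0)
  have hpM2 : (p • M) * (p • M) = 0 := by
    rw [smul_mul_assoc, mul_smul_comm, hM2, smul_zero, smul_zero]
  have hpM0 : p • M ≠ 0 := smul_ne_zero hp0 hM0
  obtain ⟨U₁, hU₁⟩ := conj_E12' N hN2 hN0
  obtain ⟨U₂, hU₂⟩ := conj_E12' (p • M) hpM2 hpM0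
  refine ⟨U₂ * U₁⁻¹, p, hp0, ?_⟩
  have hE : (↑U₁⁻¹ : Matrix (Fin 2) (Fin 2) k) * N * (↑U₁ : Matrix (Fin 2) (Fin 2) k)
      = !![0,1;0,0] := by
    rw [← hU₁]
    simp only [mul_assoc, Units.inv_mul, mul_one, Units.inv_mul_cancel_left]
  have hCinv : ((U₂ * U₁⁻¹)⁻¹ : (Matrix (Fin 2) (Fin 2) k)ˣ) = U₁ * U₂⁻¹ := by
    rw [mul_inv_rev, inv_inv]
  have hCN : (↑(U₂ * U₁⁻¹) : Matrix (Fin 2) (Fin 2) k) * N *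
      (↑(U₂ * U₁⁻¹)⁻¹ : Matrix (Fin 2) (Fin 2) k) = p • M := by
    rw [hCinv, Units.val_mul, Units.val_mul, ← hU₂, ← hE]
    simp only [mul_assoc]
  have hAeq : (A : Matrix (Fin 2) (Fin 2) k) = N + d • 1 := by
    rw [hNdef]; abel
  have hCone : (↑(U₂ * U₁⁻¹) : Matrix (Fin 2) (Fin 2) k) * (d • 1) *
      (↑(U₂ * U₁⁻¹)⁻¹ : Matrix (Fin 2) (Fin 2) k) = d • 1 := by
    rw [mul_smul_comm, mul_one, smul_mul_assoc, Units.mul_inv]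
  calc (↑(U₂ * U₁⁻¹) : Matrix (Fin 2) (Fin 2) k) * (↑A : Matrix (Fin 2) (Fin 2) k) *
        (↑(U₂ * U₁⁻¹)⁻¹ : Matrix (Fin 2) (Fin 2) k)
      = (↑(U₂ * U₁⁻¹) : Matrix (Fin 2) (Fin 2) k) * N *
          (↑(U₂ * U₁⁻¹)⁻¹ : Matrix (Fin 2) (Fin 2) k)
        + (↑(U₂ * U₁⁻¹) : Matrix (Fin 2) (Fin 2) k) * (d • 1) *
          (↑(U₂ * U₁⁻¹)⁻¹ : Matrix (Fin 2) (Fin 2) k) := by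
        rw [hAeq, mul_add, add_mul]
    _ = p • M + d • 1 := by rw [hCN, hCone]
    _ = p • (B : Matrix (Fin 2) (Fin 2) k) := by
        rw [hMdef, smul_sub, smul_smul, hpdef]
        rw [show d * e⁻¹ * e = d by field_simp]
        abel
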